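/- For every integer n ≥ 1, the following identity holds in the field ℚ(Q, r, X_1, …, X_n): ( ∏_{i=1}^n (Q+X_i) − ∏_{i=1}^n X_i(1+X_i) ) · ∏_{1≤i<j≤n} (X_j−X_i)·(Q(1+X_i)(1+X_j)+rX_iX_j) = ∏_{1≤i<j≤n} (X_j−X_i)·(Q(1+X_i)(1+X_j)+rX_iX_j) · Σ_{k=1}^n (Q−X_k^2) · ∏_{1≤j≤n, j≠k} [ X_j(1+X_j)·(Q+(Q+r)X_k+X_j+X_kX_j)·(Q−X_jX_k) ] / [ (X_j−X_k)·(Q(1+X_j)(1+X_k)+rX_jX_k) ]. -/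

import Mathlib

set_option maxHeartbeats 1000000

noncomputable section

/-- The field `ℚ(Q, r, X_1, …, X_n)` of rational functions. -/
abbrev RF (n : ℕ) : Type := FractionRing (MvPolynomial (Fin n ⊕ Fin 2) ℚ)

/-- The variable `X_i`. -/
def Xv (n : ℕ) (i : Fin n) : RF n :=
  algebraMap (MvPolynomial (Fin n ⊕ Fin 2) ℚ) (RF n) (MvPolynomial.X (Sum.inl i))

/-- The variable `Q`. -/
def Qv (n : ℕ) : RF n :=
  algebraMap (MvPolynomial (Fin n ⊕ Fin 2) ℚ) (RF n) (MvPolynomial.X (Sum.inr 0))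

/-- The variable `r`. -/
def rv (n : ℕ) : RF n :=
  algebraMap (MvPolynomial (Fin n ⊕ Fin 2) ℚ) (RF n) (MvPolynomial.X (Sum.inr 1))

open Finset Polynomial in
/-- Abstract partial-fraction identity: evaluation at `0` of the Lagrange interpolation of
`∏ (u_j t - v_j w_j) - (∏ u_j) ∏ (t - w_j)` at the nodes `w_k`. -/
theorem lagrange_aux {F : Type*} [Field F] (n : ℕ) (u v w : Fin n → F)
    (hw0 : ∀ k, w k ≠ 0) (hww : Function.Injective w) :
    (∏ i, u i) - ∏ i, v i =
      ∑ k, (u k - v k) *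
        ∏ j ∈ Finset.univ.erase k, ((u j * w k - v j * w j) / (w k - w j)) := by
  classical
  set p : Polynomial F :=
    (∏ j, (Polynomial.C (u j) * Polynomial.X - Polynomial.C (v j * w j))) -
      Polynomial.C (∏ j, u j) * ∏ j, (Polynomial.X - Polynomial.C (w j)) with hp
  have hinj : Set.InjOn w (Finset.univ : Finset (Fin n)) := fun a _ b _ h => hww h
  have hcard : (Finset.univ : Finset (Fin n)).card = n := by simp
  have hd1 : ∀ j : Fin n,
      (Polynomial.C (u j) * Polynomial.X - Polynomial.C (v j * w j)).natDegree ≤ 1 := by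
    intro j
    refine le_trans (natDegree_sub_le _ _) (max_le ?_ ?_)
    · exact le_trans (natDegree_C_mul_le _ _) (le_of_eq natDegree_X)
    · rw [Polynomial.natDegree_C]; norm_num
  have hd2 : ∀ j : Fin n, (Polynomial.X - Polynomial.C (w j) : Polynomial F).natDegree ≤ 1 := by
    intro j
    refine le_trans (natDegree_sub_le _ _) (max_le (le_of_eq natDegree_X) (by simp))
  have hA : (∏ j, (Polynomial.C (u j) * Polynomial.X -
      Polynomial.C (v j * w j))).natDegree ≤ n := by
    refine le_trans (natDegree_prod_le _ _) ?_
    have h2 := Finset.sum_le_sum (s := (Finset.univ : Finset (Fin n)))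
      (f := fun j => (Polynomial.C (u j) * Polynomial.X -
        Polynomial.C (v j * w j)).natDegree)
      (g := fun _ => 1) (fun j _ => hd1 j)
    simpa using h2
  have hB : (∏ j, (Polynomial.X - Polynomial.C (w j) : Polynomial F)).natDegree ≤ n := by
    refine le_trans (natDegree_prod_le _ _) ?_
    have h2 := Finset.sum_le_sum (s := (Finset.univ : Finset (Fin n)))
      (f := fun j => (Polynomial.X - Polynomial.C (w j) : Polynomial F).natDegree)
      (g := fun _ => 1) (fun j _ => hd2 j)
    simpa using h2
  have hcA : (∏ j, (Polynomial.C (u j) * Polynomial.X -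
      Polynomial.C (v j * w j))).coeff n = ∏ j, u j := by
    have h := coeff_prod_of_natDegree_le
      (s := (Finset.univ : Finset (Fin n)))
      (fun j => Polynomial.C (u j) * Polynomial.X - Polynomial.C (v j * w j)) 1
      (fun j _ => hd1 j)
    simp only [hcard, mul_one] at h
    rw [h]
    refine Finset.prod_congr rfl fun j _ => ?_
    simp [coeff_sub, coeff_C_mul, coeff_X_one, coeff_C]
  have hcB : (∏ j, (Polynomial.X - Polynomial.C (w j) : Polynomial F)).coeff n = 1 := by
    have h := coeff_prod_of_natDegree_le
      (s := (Finset.univ : Finset (Fin n)))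
      (fun j => (Polynomial.X - Polynomial.C (w j) : Polynomial F)) 1
      (fun j _ => hd2 j)
    simp only [hcard, mul_one] at h
    rw [h]
    refine Finset.prod_eq_one fun j _ => ?_
    simp [coeff_sub, coeff_X_one, coeff_C]
  have hdeg : p.degree < ((Finset.univ : Finset (Fin n)).card : ℕ) := by
    rw [hcard, degree_lt_iff_coeff_zero]
    intro m hm
    rcases eq_or_lt_of_le hm with h | h
    · rw [← h, hp, coeff_sub, hcA, coeff_C_mul, hcB, mul_one, sub_self]
    · refine coeff_eq_zero_of_natDegree_lt (lt_of_le_of_lt ?_ h)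
      rw [hp]
      refine le_trans (natDegree_sub_le _ _) (max_le hA ?_)
      exact le_trans (natDegree_C_mul_le _ _) hB
  have heq := Lagrange.eq_interpolate (f := p) hinj hdeg
  have hkey := congrArg (Polynomial.eval 0) heq
  -- compute eval 0 p
  have hL : Polynomial.eval 0 p =
      (∏ j, v j) * (∏ j, -(w j)) - (∏ j, u j) * ∏ j, -(w j) := by
    rw [hp]
    simp only [eval_sub, eval_mul, eval_prod, eval_C, eval_X, mul_zero, zero_sub]
    congr 1
    rw [← Finset.prod_mul_distrib]
    exact Finset.prod_congr rfl fun j _ => by ring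
  -- compute eval 0 of the interpolation
  have hR : Polynomial.eval 0 (Lagrange.interpolate Finset.univ w fun i => p.eval (w i)) =
      ∑ k, Polynomial.eval (w k) p *
        ∏ j ∈ Finset.univ.erase k, ((w k - w j)⁻¹ * (0 - w j)) := by
    rw [Lagrange.interpolate_apply, eval_finset_sum]
    refine Finset.sum_congr rfl fun k _ => ?_
    rw [eval_mul, eval_C]
    congr 1
    rw [Lagrange.basis, eval_prod]
    refine Finset.prod_congr rfl fun j _ => ?_
    simp [Lagrange.basisDivisor]
  have hEvalk : ∀ k : Fin n, Polynomial.eval (w k) p =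
      (u k * w k - v k * w k) * ∏ j ∈ Finset.univ.erase k, (u j * w k - v j * w j) := by
    intro k
    rw [hp]
    simp only [eval_sub, eval_mul, eval_prod, eval_C, eval_X]
    have hz : (∏ j, (w k - w j)) = 0 :=
      Finset.prod_eq_zero (Finset.mem_univ k) (sub_self _)
    rw [hz, mul_zero, sub_zero,
      ← Finset.mul_prod_erase Finset.univ (fun j => u j * w k - v j * w j) (Finset.mem_univ k)]
  have hc : (∏ j, -(w j)) ≠ 0 :=
    Finset.prod_ne_zero_iff.mpr fun j _ => neg_ne_zero.mpr (hw0 j)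
  apply mul_right_cancel₀ hc
  rw [Finset.sum_mul]
  have goal2 : ∀ k : Fin n,
      (u k - v k) * (∏ j ∈ Finset.univ.erase k, ((u j * w k - v j * w j) / (w k - w j))) *
          (∏ j, -(w j)) =
        -(((u k * w k - v k * w k) * ∏ j ∈ Finset.univ.erase k, (u j * w k - v j * w j)) *
          ∏ j ∈ Finset.univ.erase k, ((w k - w j)⁻¹ * (0 - w j))) := by
    intro k
    rw [← Finset.mul_prod_erase Finset.univ (fun j => -(w j)) (Finset.mem_univ k)]
    have key2 : (∏ j ∈ Finset.univ.erase k, ((u j * w k - v j * w j) / (w k - w j))) *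
        (∏ j ∈ Finset.univ.erase k, -(w j)) =
        (∏ j ∈ Finset.univ.erase k, (u j * w k - v j * w j)) *
          ∏ j ∈ Finset.univ.erase k, ((w k - w j)⁻¹ * (0 - w j)) := by
      rw [← Finset.prod_mul_distrib, ← Finset.prod_mul_distrib]
      refine Finset.prod_congr rfl fun j _ => ?_
      rw [div_eq_mul_inv]
      ring
    linear_combination (-(u k - v k) * w k) * key2
  calc ((∏ i, u i) - ∏ i, v i) * ∏ j, -(w j)
      = -(Polynomial.eval 0 p) := by rw [hL]; ring
    _ = -(Polynomial.eval 0 (Lagrange.interpolate Finset.univ w fun i => p.eval (w i))) := by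
        rw [hkey]
    _ = ∑ k, -(Polynomial.eval (w k) p *
          ∏ j ∈ Finset.univ.erase k, ((w k - w j)⁻¹ * (0 - w j))) := by
        rw [hR, ← Finset.sum_neg_distrib]
    _ = ∑ k, (u k - v k) *
          (∏ j ∈ Finset.univ.erase k, ((u j * w k - v j * w j) / (w k - w j))) *
          (∏ j, -(w j)) := by
        refine Finset.sum_congr rfl fun k _ => ?_
        rw [goal2 k, hEvalk k, mul_assoc]

/-- Nonzeroness of images of nonzero polynomials in the fraction field, via evaluation. -/
theorem algebraMap_ne_zero {n : ℕ} (p : MvPolynomial (Fin n ⊕ Fin 2) ℚ)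
    (h : MvPolynomial.eval (Sum.elim (fun i : Fin n => ((i : ℕ) : ℚ) + 1) (fun _ => 1)) p ≠ 0) :
    algebraMap (MvPolynomial (Fin n ⊕ Fin 2) ℚ) (RF n) p ≠ 0 := by
  intro h0
  exact h (by rw [IsFractionRing.to_map_eq_zero_iff.mp h0, map_zero])

/-- The key rational-function identity used in the induction proof. -/
theorem stmt_12 (n : ℕ) (hn : 1 ≤ n) :
    ((∏ i : Fin n, (Qv n + Xv n i)) - ∏ i : Fin n, Xv n i * (1 + Xv n i)) *
      ∏ i : Fin n, ∏ j ∈ Finset.Ioi i,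
        (Xv n j - Xv n i) *
          (Qv n * (1 + Xv n i) * (1 + Xv n j) + rv n * Xv n i * Xv n j) =
    (∏ i : Fin n, ∏ j ∈ Finset.Ioi i,
        (Xv n j - Xv n i) *
          (Qv n * (1 + Xv n i) * (1 + Xv n j) + rv n * Xv n i * Xv n j)) *
      ∑ k : Fin n, (Qv n - Xv n k ^ 2) *
        ∏ j ∈ Finset.univ.erase k,
          Xv n j * (1 + Xv n j) *
              (Qv n + (Qv n + rv n) * Xv n k + Xv n j + Xv n k * Xv n j) *
              (Qv n - Xv n j * Xv n k) /
            ((Xv n j - Xv n k) *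
              (Qv n * (1 + Xv n j) * (1 + Xv n k) + rv n * Xv n j * Xv n k)) := by
  classical
  -- nonzeroness facts
  have hv : ∀ k : Fin n, Xv n k * (1 + Xv n k) ≠ 0 := by
    intro k
    have hrw : Xv n k * (1 + Xv n k) =
        algebraMap (MvPolynomial (Fin n ⊕ Fin 2) ℚ) (RF n)
          (MvPolynomial.X (Sum.inl k) * (1 + MvPolynomial.X (Sum.inl k))) := by
      simp [Xv, map_mul, map_add, map_one]
    rw [hrw]
    apply algebraMap_ne_zero
    simp only [map_mul, map_add, map_one, MvPolynomial.eval_X, Sum.elim_inl]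
    positivity
  have hg : ∀ k : Fin n,
      Qv n * (1 + Xv n k) + Xv n k * (1 + rv n + Xv n k) ≠ 0 := by
    intro k
    have hrw : Qv n * (1 + Xv n k) + Xv n k * (1 + rv n + Xv n k) =
        algebraMap (MvPolynomial (Fin n ⊕ Fin 2) ℚ) (RF n)
          (MvPolynomial.X (Sum.inr 0) * (1 + MvPolynomial.X (Sum.inl k)) +
            MvPolynomial.X (Sum.inl k) *
              (1 + MvPolynomial.X (Sum.inr 1) + MvPolynomial.X (Sum.inl k))) := by
      simp [Xv, Qv, rv, map_mul, map_add, map_one]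
    rw [hrw]
    apply algebraMap_ne_zero
    simp only [map_mul, map_add, map_one, MvPolynomial.eval_X, Sum.elim_inl, Sum.elim_inr]
    positivity
  have hD : ∀ j k : Fin n, j ≠ k →
      (Xv n j - Xv n k) *
        (Qv n * (1 + Xv n j) * (1 + Xv n k) + rv n * Xv n j * Xv n k) ≠ 0 := by
    intro j k hjk
    have hrw : (Xv n j - Xv n k) *
        (Qv n * (1 + Xv n j) * (1 + Xv n k) + rv n * Xv n j * Xv n k) =
        algebraMap (MvPolynomial (Fin n ⊕ Fin 2) ℚ) (RF n)
          ((MvPolynomial.X (Sum.inl j) - MvPolynomial.X (Sum.inl k)) *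
            (MvPolynomial.X (Sum.inr 0) * (1 + MvPolynomial.X (Sum.inl j)) *
                (1 + MvPolynomial.X (Sum.inl k)) +
              MvPolynomial.X (Sum.inr 1) * MvPolynomial.X (Sum.inl j) *
                MvPolynomial.X (Sum.inl k))) := by
      simp [Xv, Qv, rv, map_mul, map_add, map_one, map_sub]
    rw [hrw]
    apply algebraMap_ne_zero
    simp only [map_mul, map_add, map_one, map_sub, MvPolynomial.eval_X, Sum.elim_inl,
      Sum.elim_inr]
    have hj : ((j : ℕ) : ℚ) ≠ ((k : ℕ) : ℚ) := by
      exact_mod_cast fun h => hjk (Fin.val_injective h)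
    refine mul_ne_zero (by intro h; exact hj (by linarith [sub_eq_zero.mp h])) ?_
    positivity
  -- introduce the auxiliary functions
  set w : Fin n → RF n := fun k =>
    (Qv n * (1 + Xv n k) + Xv n k * (1 + rv n + Xv n k)) / (Xv n k * (1 + Xv n k)) with hw
  have hw0 : ∀ k, w k ≠ 0 := fun k => div_ne_zero (hg k) (hv k)
  have hwkj : ∀ j k : Fin n, w k - w j =
      ((Xv n j - Xv n k) *
        (Qv n * (1 + Xv n j) * (1 + Xv n k) + rv n * Xv n j * Xv n k)) /
        ((Xv n k * (1 + Xv n k)) * (Xv n j * (1 + Xv n j))) := by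
    intro j k
    rw [hw]
    rw [div_sub_div _ _ (hv k) (hv j)]
    congr 1
    ring
  have hwinj : Function.Injective w := by
    intro j k h
    by_contra hjk
    have h2 : w k - w j = 0 := by rw [h]; exact sub_self _
    rw [hwkj j k] at h2
    rcases div_eq_zero_iff.mp h2 with h3 | h3
    · exact hD j k hjk h3
    · exact mul_ne_zero (hv k) (hv j) h3
  have main := lagrange_aux n (fun k => Qv n + Xv n k) (fun k => Xv n k * (1 + Xv n k)) w
    hw0 hwinj
  have key : (∏ i : Fin n, (Qv n + Xv n i)) - ∏ i : Fin n, Xv n i * (1 + Xv n i) =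
      ∑ k : Fin n, (Qv n - Xv n k ^ 2) *
        ∏ j ∈ Finset.univ.erase k,
          Xv n j * (1 + Xv n j) *
              (Qv n + (Qv n + rv n) * Xv n k + Xv n j + Xv n k * Xv n j) *
              (Qv n - Xv n j * Xv n k) /
            ((Xv n j - Xv n k) *
              (Qv n * (1 + Xv n j) * (1 + Xv n k) + rv n * Xv n j * Xv n k)) := by
    rw [main]
    refine Finset.sum_congr rfl fun k _ => ?_
    congr 1
    · ring
    · refine Finset.prod_congr rfl fun j hj => ?_
      have hjk : j ≠ k := (Finset.mem_erase.mp hj).1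
      have hne : w k - w j ≠ 0 := by
        rw [hwkj j k]
        exact div_ne_zero (hD j k hjk) (mul_ne_zero (hv k) (hv j))
      have hwk : w k = (Qv n * (1 + Xv n k) + Xv n k * (1 + rv n + Xv n k)) /
          (Xv n k * (1 + Xv n k)) := by rw [hw]
      have hwj : w j = (Qv n * (1 + Xv n j) + Xv n j * (1 + rv n + Xv n j)) /
          (Xv n j * (1 + Xv n j)) := by rw [hw]
      rw [div_eq_div_iff hne (hD j k hjk), hwkj j k, hwk, hwj]
      simp only [← mul_div_assoc]
      rw [div_sub_div _ _ (hv k) (hv j), div_mul_eq_mul_div]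
      rw [div_eq_div_iff (mul_ne_zero (hv k) (hv j)) (mul_ne_zero (hv k) (hv j))]
      ring
  rw [key, mul_comm]

end
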